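/- Let L/F be a Galois extension of fields of characteristic zero with [L:F] = 3, and suppose α ∈ L is a nonzero element with Tr_{L/F}(α) = 0 and Tr_{L/F}(α⁻¹) = 0. Then the minimal polynomial of α over F has the form X³ − a for some a ∈ F, and F contains a primitive third root of unity (i.e. there exists ω ∈ F with ω ≠ 1 and ω³ = 1). -/

import Mathlib

open Polynomial

private lemma monic_dvd_eq' {K : Type*} [Field K] {p q : K[X]} (hp : p.Monic) (hq : q.Monic)
    (h : p ∣ q) (hd : q.natDegree ≤ p.natDegree) : p = q := by
  obtain ⟨c, rfl⟩ := h
  have hc : c ≠ 0 := by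
    rintro rfl
    simp [Polynomial.Monic] at hq
  have hdeg : (p * c).natDegree = p.natDegree + c.natDegree :=
    natDegree_mul hp.ne_zero hc
  have hc0 : c.natDegree = 0 := by omega
  obtain ⟨x, rfl⟩ : ∃ x, c = C x := ⟨c.coeff 0, eq_C_of_natDegree_eq_zero hc0⟩
  have := hq.leadingCoeff
  rw [leadingCoeff_mul, hp.leadingCoeff, one_mul, leadingCoeff_C] at this
  simp [this]

private lemma trace_zero_aux {F L : Type*} [Field F] [CharZero F] [Field L] [Algebra F L]
    [FiniteDimensional F L] (hdim : Module.finrank F L = 3)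
    (β : L) (hβ : β ≠ 0) (h : Algebra.trace F L β = 0) :
    (minpoly F β).natDegree = 3 ∧ (minpoly F β).nextCoeff = 0 := by
  have hint : IsIntegral F β := IsIntegral.of_finite F β
  have hdvd : (minpoly F β).natDegree ∣ 3 := hdim ▸ minpoly.degree_dvd hint
  have hnr : β ∉ (algebraMap F L).range := by
    rintro ⟨x, rfl⟩
    rw [Algebra.trace_algebraMap, hdim] at h
    have : x = 0 := by
      have h3 : (3 : F) * x = 0 := by simpa [nsmul_eq_mul] using h
      rcases mul_eq_zero.1 h3 with h' | h'
      · exact absurd h' (by norm_num)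
      · exact h'
    simp [this] at hβ
  have h2le : 2 ≤ (minpoly F β).natDegree := (minpoly.two_le_natDegree_iff hint).2 hnr
  have hdeg : (minpoly F β).natDegree = 3 := by
    rcases (Nat.prime_three).eq_one_or_self_of_dvd _ hdvd with h' | h' <;> omega
  refine ⟨hdeg, ?_⟩
  -- build a power basis with generator β
  have htop : Algebra.adjoin F ({β} : Set L) = ⊤ := by
    have hfr : Module.finrank F (Algebra.adjoin F ({β} : Set L)) = Module.finrank F L := by
      rw [(Algebra.adjoin.powerBasis hint).finrank, Algebra.adjoin.powerBasis_dim, hdeg, hdim]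
    exact Algebra.toSubmodule_eq_top.1 (Submodule.eq_top_of_finrank_eq hfr)
  let pb : PowerBasis F L := (Algebra.adjoin.powerBasis hint).map
    ((Subalgebra.equivOfEq _ ⊤ htop).trans Subalgebra.topEquiv)
  have hgen : pb.gen = β := rfl
  have := pb.trace_gen_eq_nextCoeff_minpoly
  rw [hgen, h] at this
  exact neg_eq_zero.1 this.symm

/-- Let `L/F` be a Galois extension of fields of characteristic zero with `[L:F] = 3`,
and suppose `α ∈ L` is a nonzero element with `Tr_{L/F}(α) = 0` and `Tr_{L/F}(α⁻¹) = 0`.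
Then the minimal polynomial of `α` over `F` has the form `X³ − a` for some `a ∈ F`, and
`F` contains a primitive third root of unity. -/
theorem stmt_3 (F L : Type*) [Field F] [CharZero F] [Field L] [Algebra F L]
    [FiniteDimensional F L] [IsGalois F L] (hdim : Module.finrank F L = 3)
    (α : L) (hα : α ≠ 0) (h1 : Algebra.trace F L α = 0) (h2 : Algebra.trace F L α⁻¹ = 0) :
    (∃ a : F, minpoly F α = X ^ 3 - C a) ∧ ∃ ω : F, ω ≠ 1 ∧ ω ^ 3 = 1 := by
  classical
  have hint : IsIntegral F α := IsIntegral.of_finite F α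
  have hint' : IsIntegral F α⁻¹ := IsIntegral.of_finite F α⁻¹
  have hαi : α⁻¹ ≠ 0 := inv_ne_zero hα
  obtain ⟨hdeg, hnc⟩ := trace_zero_aux hdim α hα h1
  obtain ⟨hdeg', hnc'⟩ := trace_zero_aux hdim α⁻¹ hαi h2
  set p := minpoly F α with hp
  have hmono : p.Monic := minpoly.monic hint
  have hc0 : p.coeff 0 ≠ 0 := minpoly.coeff_zero_ne_zero hint hα
  have hc3 : p.coeff 3 = 1 := by
    have := hmono.coeff_natDegree
    rwa [hdeg] at this
  have hc2 : p.coeff 2 = 0 := by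
    rw [nextCoeff_of_natDegree_pos (by omega), hdeg] at hnc
    norm_num at hnc
    exact hnc
  -- the basic algebraic relation for α
  have hps : p = ∑ i ∈ Finset.range 4, monomial i (p.coeff i) := p.as_sum_range' 4 (by omega)
  have hrel : α ^ 3 + algebraMap F L (p.coeff 1) * α + algebraMap F L (p.coeff 0) = 0 := by
    have h0 := minpoly.aeval F α
    rw [← hp, hps] at h0
    simp [Finset.sum_range_succ, hc3, hc2, aeval_monomial] at h0
    linear_combination h0
  -- the minimal polynomial of α⁻¹
  have hA0 : algebraMap F L (p.coeff 0) ≠ 0 := fun h =>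
    hc0 ((algebraMap F L).injective (h.trans (map_zero _).symm))
  set q : F[X] := X ^ 3 + C (p.coeff 1 / p.coeff 0) * X ^ 2 + C (p.coeff 2 / p.coeff 0) * X
      + C (1 / p.coeff 0) with hq
  have hqm : q.Monic := by unfold q; monicity!
  have hqdeg : q.natDegree = 3 := by unfold q; compute_degree!
  have haq : Polynomial.aeval α⁻¹ q = 0 := by
    have e1 : α * α⁻¹ = 1 := mul_inv_cancel₀ hα
    have e0 : algebraMap F L (p.coeff 0) * (algebraMap F L (p.coeff 0))⁻¹ = 1 :=
      mul_inv_cancel₀ hA0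
    rw [hq]
    simp only [map_add, map_mul, map_pow, aeval_X, aeval_C, map_div₀, map_one, hc2, map_zero,
      zero_div, zero_mul, add_zero]
    linear_combination (algebraMap F L (p.coeff 0))⁻¹ * α⁻¹ ^ 3 * hrel -
      ((algebraMap F L (p.coeff 0))⁻¹ * (α ^ 2 * α⁻¹ ^ 2 + α * α⁻¹ + 1) +
        (algebraMap F L (p.coeff 1)) * (algebraMap F L (p.coeff 0))⁻¹ * α⁻¹ ^ 2) * e1 -
      α⁻¹ ^ 3 * e0
  have hqeq : minpoly F α⁻¹ = q :=
    monic_dvd_eq' (minpoly.monic hint') hqm (minpoly.dvd F _ haq) (by rw [hdeg', hqdeg])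
  have hc1 : p.coeff 1 = 0 := by
    rw [nextCoeff_of_natDegree_pos (by omega), hdeg', hqeq] at hnc'
    norm_num [hq, coeff_C, hc2] at hnc'
    rcases hnc' with h' | h'
    · exact h'
    · exact absurd h' hc0
  -- form of the minimal polynomial
  have hform : p = X ^ 3 - C (-(p.coeff 0)) := by
    conv_lhs => rw [hps]
    rw [map_neg, sub_neg_eq_add]
    simp only [Finset.sum_range_succ, Finset.sum_range_one, hc1, hc2, hc3,
      monomial_zero_right, add_zero, monomial_zero_left, ← X_pow_eq_monomial]
    ring
  refine ⟨⟨-(p.coeff 0), hform⟩, ?_⟩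
  -- second part: primitive cube root of unity
  have hsep : p.Separable := Algebra.IsSeparable.isSeparable F α
  have hsplit : Splits (p.map (algebraMap F L)) := Normal.splits (inferInstance : Normal F L) α
  set pm := p.map (algebraMap F L) with hpm
  have hpm0 : pm ≠ 0 := (Polynomial.map_ne_zero_iff (algebraMap F L).injective).2
    (minpoly.ne_zero hint)
  have hcard : Multiset.card pm.roots = 3 := by
    have := hsplit.natDegree_eq_card_roots.symm
    rwa [hpm, natDegree_map, hdeg] at this
  have hnodup : pm.roots.Nodup := Polynomial.nodup_roots (hsep.map)
  have hfin : 1 < pm.roots.toFinset.card := by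
    rw [Multiset.toFinset_card_of_nodup hnodup, hcard]; norm_num
  obtain ⟨β, hβmem, hβne⟩ := Finset.exists_mem_ne hfin α
  have hβroot : pm.eval β = 0 := by
    have hm := Multiset.mem_toFinset.1 hβmem
    exact (Polynomial.mem_roots hpm0).1 hm
  have hβ3 : β ^ 3 = algebraMap F L (-(p.coeff 0)) := by
    rw [hpm, hform] at hβroot
    simp [eval_map, eval₂_sub, eval₂_pow] at hβroot
    rw [map_neg]
    linear_combination hβroot
  have hα3 : α ^ 3 = algebraMap F L (-(p.coeff 0)) := by
    have h0 := minpoly.aeval F α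
    rw [← hp, hform] at h0
    simp at h0
    rw [map_neg]
    linear_combination h0
  set ζ : L := β * α⁻¹ with hζ
  have hζ3 : ζ ^ 3 = 1 := by
    have hα30 : α ^ 3 ≠ 0 := pow_ne_zero 3 hα
    rw [hζ, mul_pow, inv_pow, hβ3, ← hα3, mul_inv_cancel₀ hα30]
  have hζne : ζ ≠ 1 := by
    rw [hζ]
    intro h
    apply hβne
    field_simp at h
    exact h
  have hquad : ζ ^ 2 + ζ + 1 = 0 := by
    have hfac : (ζ - 1) * (ζ ^ 2 + ζ + 1) = 0 := by linear_combination hζ3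
    rcases mul_eq_zero.1 hfac with h' | h'
    · exact absurd (by linear_combination h') hζne
    · exact h'
  have hintζ : IsIntegral F ζ := IsIntegral.of_finite F ζ
  have hdvd2 : minpoly F ζ ∣ (X ^ 2 + X + 1 : F[X]) :=
    minpoly.dvd F ζ (by simpa using hquad)
  have hXdeg : (X ^ 2 + X + 1 : F[X]).natDegree = 2 := by compute_degree!
  have hXne : (X ^ 2 + X + 1 : F[X]) ≠ 0 := by
    intro h
    have := congrArg (Polynomial.coeff · 0) h
    simp at this
  have hle2 : (minpoly F ζ).natDegree ≤ 2 := hXdeg ▸ natDegree_le_of_dvd hdvd2 hXne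
  have hd3 : (minpoly F ζ).natDegree ∣ 3 := hdim ▸ minpoly.degree_dvd hintζ
  have hpos : 0 < (minpoly F ζ).natDegree := minpoly.natDegree_pos hintζ
  have hone : (minpoly F ζ).natDegree = 1 := by
    rcases (Nat.prime_three).eq_one_or_self_of_dvd _ hd3 with h' | h' <;> omega
  obtain ⟨ω, hω⟩ := (minpoly.natDegree_eq_one_iff).1 hone
  refine ⟨ω, ?_, ?_⟩
  · intro h
    apply hζne
    rw [← hω, h, map_one]
  · apply (algebraMap F L).injective
    rw [map_pow, hω, hζ3, map_one]
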